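/- Let X be a normed space and φ : X → [0,∞) with φ(λx) = |λ|φ(x) and φ(x) = 0 iff x = 0. If the set C_φ = { x : φ(x) ≤ 1 } is unbounded, then the polar set C_φ° = { x* ∈ X* : sup_{x ∈ C_φ} x*(x) ≤ 1 } is contained in a porous subset of X*. -/

import Mathlib

open Filter

/-- `A` is a porous subset of the metric space `α` with porosity constant `c`. -/
def Porous {α : Type*} [PseudoMetricSpace α] (A : Set α) (c : ℝ) : Prop :=
  ∀ a ∈ A, ∃ y : ℕ → α, Tendsto y atTop (nhds a) ∧
    ∀ n, Metric.closedBall (y n) (c * dist (y n) a) ∩ A = ∅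

/-- `A` is σ-porous: a countable union of porous sets. -/
def SigmaPorous {α : Type*} [PseudoMetricSpace α] (A : Set α) : Prop :=
  ∃ P : ℕ → Set α, (∀ n, ∃ c : ℝ, 0 < c ∧ c < 1 ∧ Porous (P n) c) ∧ A = ⋃ n, P n

open NormedSpace in
theorem stmt9 {X : Type*} [NormedAddCommGroup X] [NormedSpace ℝ X]
    (φ : X → ℝ) (hnn : ∀ x, 0 ≤ φ x)
    (hhom : ∀ (a : ℝ) (x : X), φ (a • x) = |a| * φ x)
    (hzero : ∀ x, φ x = 0 ↔ x = 0)
    (hunb : ¬ ∃ M : ℝ, ∀ x, φ x ≤ 1 → ‖x‖ ≤ M) :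
    ∃ (A : Set (StrongDual ℝ X)) (c : ℝ), 0 < c ∧ c < 1 ∧ Porous A c ∧
      {x' : StrongDual ℝ X | ∀ x, φ x ≤ 1 → x' x ≤ 1} ⊆ A := by

  push_neg at hunb
  choose x hx1 hx2 using fun n : ℕ => hunb (n + 1)
  have hxpos : ∀ n, (0:ℝ) < ‖x n‖ := fun n => lt_of_le_of_lt (by positivity) (hx2 n)
  have hxne : ∀ n, x n ≠ 0 := fun n => norm_pos_iff.mp (hxpos n)
  choose f hf1 hf2 using fun n => exists_dual_vector ℝ (x n) (hxpos n).ne'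
  refine ⟨{x' : StrongDual ℝ X | ∀ x, φ x ≤ 1 → x' x ≤ 1}, 1/2, by norm_num, by norm_num, ?_,
    subset_rfl⟩
  intro x' hx'
  set ε : ℕ → ℝ := fun n => 6 / ‖x n‖ with hεdef
  have hεpos : ∀ n, 0 < ε n := fun n => by
    have := hxpos n; simp only [hεdef]; positivity
  have hεmul : ∀ n, ε n * ‖x n‖ = 6 := fun n => by
    have := (hxpos n).ne'
    simp only [hεdef]; field_simp
  refine ⟨fun n => x' + ε n • f n, ?_, ?_⟩
  · have hdist : ∀ n, dist (x' + ε n • f n) x' = ε n := by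
      intro n
      rw [dist_eq_norm]
      simp [norm_smul, hf1, abs_of_pos (hεpos n)]
    rw [tendsto_iff_dist_tendsto_zero]
    simp only [hdist]
    have hbig : Tendsto (fun n : ℕ => (n:ℝ) + 1) atTop atTop :=
      Filter.tendsto_atTop_add_const_right atTop 1 tendsto_natCast_atTop_atTop
    have hb : Tendsto (fun n : ℕ => 6 / ((n:ℝ) + 1)) atTop (nhds 0) :=
      Tendsto.div_atTop tendsto_const_nhds hbig
    refine squeeze_zero (fun n => (hεpos n).le) (fun n => ?_) hb
    have h1 : (n:ℝ) + 1 ≤ ‖x n‖ := by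
      have := hx2 n; push_cast at this ⊢; linarith
    exact div_le_div_of_nonneg_left (by norm_num) (by positivity) h1
  · intro n
    rw [Set.eq_empty_iff_forall_notMem]
    rintro z ⟨hz1, hz2⟩
    have hdist : dist (x' + ε n • f n) x' = ε n := by
      rw [dist_eq_norm]
      simp [norm_smul, hf1, abs_of_pos (hεpos n)]
    rw [Metric.mem_closedBall, hdist] at hz1
    -- z (x n) ≤ 1 from hz2, but z (x n) ≥ 2
    have hle : z (x n) ≤ 1 := hz2 (x n) (hx1 n)
    have hlow : x' (x n) ≥ -1 := by
      have hφ : φ (-(x n)) ≤ 1 := by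
        have := hhom (-1) (x n)
        simp at this
        rw [show -(x n) = (-1:ℝ) • (x n) by simp, hhom]
        simpa using hx1 n
      have := hx' (-(x n)) hφ
      simp at this
      linarith
    have hdiff : |(z - (x' + ε n • f n)) (x n)| ≤ (1/2 * ε n) * ‖x n‖ := by
      calc |(z - (x' + ε n • f n)) (x n)| ≤ ‖z - (x' + ε n • f n)‖ * ‖x n‖ :=
            (z - (x' + ε n • f n)).le_opNorm (x n) |>.trans_eq' (by
              rw [Real.norm_eq_abs])
        _ ≤ (1/2 * ε n) * ‖x n‖ := by
            apply mul_le_mul_of_nonneg_right _ (norm_nonneg _)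
            rw [← dist_eq_norm]; exact hz1
    have hval : z (x n) = x' (x n) + ε n * (f n (x n)) + (z - (x' + ε n • f n)) (x n) := by
      simp only [ContinuousLinearMap.sub_apply, ContinuousLinearMap.add_apply,
        ContinuousLinearMap.smul_apply, smul_eq_mul]
      ring
    have h6 : ε n * (f n (x n)) = 6 := by rw [hf2 n]; exact hεmul n
    have habs := abs_le.mp hdiff
    have : (1/2 * ε n) * ‖x n‖ = 3 := by
      have := hεmul n; linarith [hεmul n]
    rw [this] at habs
    rw [hval, h6] at hle
    linarith [habs.1]
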